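/- Let D be a multidigraph and v ∈ V(D) with out-degree 2 and in-degree 2, such that two parallel arcs link v to a vertex w₁, one arc links v to w₂, and one arc links v to w₃. Let 𝒳 be a collection of 2-element vertex sets such that inverting all sets of 𝒳 in D yields a 2-arc-strong multidigraph. Then either all three pairs {v,w₁}, {v,w₂}, {v,w₃} belong to 𝒳, or none of them does. -/

import Mathlib

/-- The number of arcs of the multidigraph `A` (arc multiplicities) leaving `S`. -/
def mdicut {V : Type*} [Fintype V] [DecidableEq V] (A : V → V → ℕ) (S : Finset V) : ℕ :=
  ∑ u ∈ S, ∑ v ∈ Sᶜ, A u v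

/-- A multidigraph is `k`-arc-strong iff every dicut has size at least `k`. -/
def mArcStrong {V : Type*} [Fintype V] [DecidableEq V] (A : V → V → ℕ) (k : ℕ) : Prop :=
  ∀ S : Finset V, S.Nonempty → S ≠ Finset.univ → k ≤ mdicut A S

/-- Inverting a vertex set `X` in a multidigraph. -/
def minvert {V : Type*} [DecidableEq V] (A : V → V → ℕ) (X : Finset V) : V → V → ℕ :=
  fun u v => if u ∈ X ∧ v ∈ X then A v u else A u v

/-- Applying a sequence of inversions to a multidigraph. -/
def minvertSeq {V : Type*} [DecidableEq V] (A : V → V → ℕ) (l : List (Finset V)) :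
    V → V → ℕ :=
  l.foldl minvert A

lemma minvertSeq_eq {V : Type*} [DecidableEq V] (l : List (Finset V)) (A : V → V → ℕ)
    (u v : V) :
    minvertSeq A l u v =
      if Odd (l.countP (fun X => decide (u ∈ X ∧ v ∈ X))) then A v u else A u v := by
  induction l generalizing A with
  | nil => simp [minvertSeq]
  | cons X l ih =>
    have hstep : minvertSeq A (X :: l) = minvertSeq (minvert A X) l := rfl
    rw [hstep, ih]
    by_cases hX : u ∈ X ∧ v ∈ X
    · have hX' : v ∈ X ∧ u ∈ X := ⟨hX.2, hX.1⟩
      simp only [List.countP_cons, minvert, hX, hX', if_pos, decide_eq_true_eq, Nat.odd_add_one]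
      by_cases h : Odd (List.countP (fun X => decide (u ∈ X ∧ v ∈ X)) l) <;>
        simp only [Bool.decide_and] at h ⊢ <;> simp [h, Nat.odd_add_one]
    · have hX' : ¬ (v ∈ X ∧ u ∈ X) := fun h => hX ⟨h.2, h.1⟩
      simp only [List.countP_cons, minvert, hX, hX', if_neg, decide_eq_true_eq]
      simp only [Bool.decide_and] at hX ⊢
      by_cases h1 : u ∈ X <;> by_cases h2 : v ∈ X <;> simp_all

lemma countP_pair {V : Type*} [DecidableEq V] (𝒳 : Finset (Finset V))
    (h2 : ∀ Z ∈ 𝒳, Z.card = 2) (v w : V) (hvw : v ≠ w) :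
    𝒳.toList.countP (fun X => decide (v ∈ X ∧ w ∈ X)) =
      if {v, w} ∈ 𝒳 then 1 else 0 := by
  have hcongr : ∀ X ∈ 𝒳.toList,
      (decide (v ∈ X ∧ w ∈ X)) = true ↔ (X == ({v, w} : Finset V)) = true := by
    intro X hX
    rw [Finset.mem_toList] at hX
    simp only [decide_eq_true_eq, beq_iff_eq]
    constructor
    · rintro ⟨hv, hw⟩
      have hsub : ({v, w} : Finset V) ⊆ X := by
        intro x hx
        rcases Finset.mem_insert.1 hx with h | h
        · exact h ▸ hv
        · exact (Finset.mem_singleton.1 h) ▸ hw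
      have hcard : ({v, w} : Finset V).card = 2 := by
        rw [Finset.card_insert_of_notMem (by simp [hvw]), Finset.card_singleton]
      exact ((Finset.eq_of_subset_of_card_le hsub (by rw [h2 X hX, hcard])).symm)
    · rintro rfl
      exact ⟨Finset.mem_insert_self _ _, by simp⟩
  rw [List.countP_congr hcongr]
  have : 𝒳.toList.countP (fun X => X == ({v, w} : Finset V)) = 𝒳.toList.count {v, w} := rfl
  rw [this, List.Nodup.count 𝒳.nodup_toList]
  simp [Finset.mem_toList]

/-- The value of one entry after inverting a family of `2`-sets. -/
lemma minvertSeq_pair_eq {V : Type*} [DecidableEq V] (𝒳 : Finset (Finset V))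
    (h2 : ∀ Z ∈ 𝒳, Z.card = 2) (A : V → V → ℕ) (v w : V) (hvw : v ≠ w) :
    minvertSeq A 𝒳.toList v w = if {v, w} ∈ 𝒳 then A w v else A v w := by
  rw [minvertSeq_eq, countP_pair 𝒳 h2 v w hvw]
  by_cases h : ({v, w} : Finset V) ∈ 𝒳 <;> simp [h]

lemma mdicut_transpose {V : Type*} [Fintype V] [DecidableEq V] (A : V → V → ℕ) (S : Finset V) :
    mdicut (fun u v => A v u) S = mdicut A Sᶜ := by
  unfold mdicut
  rw [Finset.sum_comm, compl_compl]

lemma mArcStrong_transpose {V : Type*} [Fintype V] [DecidableEq V] (A : V → V → ℕ) (k : ℕ)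
    (h : mArcStrong A k) : mArcStrong (fun u v => A v u) k := by
  intro S hS hSu
  rw [mdicut_transpose]
  apply h Sᶜ
  · rw [Finset.nonempty_iff_ne_empty]
    intro hh
    rw [Finset.compl_eq_empty_iff] at hh
    exact hSu hh
  · intro hh
    rw [Finset.compl_eq_univ_iff] at hh
    exact hS.ne_empty hh

lemma minvertSeq_transpose {V : Type*} [DecidableEq V] (l : List (Finset V)) (A : V → V → ℕ) :
    minvertSeq (fun u v => A v u) l = fun u v => minvertSeq A l v u := by
  funext u v
  rw [minvertSeq_eq, minvertSeq_eq]
  have : l.countP (fun X => decide (u ∈ X ∧ v ∈ X)) =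
      l.countP (fun X => decide (v ∈ X ∧ u ∈ X)) :=
    List.countP_congr (by intro x _; simp [and_comm])
  rw [this]

lemma stmt_13_aux {V : Type*} [Fintype V] [DecidableEq V] (A : V → V → ℕ)
    (v w₁ w₂ w₃ : V)
    (hd : v ≠ w₁ ∧ v ≠ w₂ ∧ v ≠ w₃ ∧ w₁ ≠ w₂ ∧ w₁ ≠ w₃ ∧ w₂ ≠ w₃)
    (hw₁ : A v w₁ = 2)
    (hw₂ : A v w₂ + A w₂ v = 1) (hw₃ : A v w₃ + A w₃ v = 1)
    (hout : ∑ u : V, A v u = 2) (hin : ∑ u : V, A u v = 2)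
    (𝒳 : Finset (Finset V)) (h2 : ∀ Z ∈ 𝒳, Z.card = 2)
    (hstrong : mArcStrong (minvertSeq A 𝒳.toList) 2) :
    ({v, w₁} ∈ 𝒳 ∧ {v, w₂} ∈ 𝒳 ∧ {v, w₃} ∈ 𝒳) ∨
      ({v, w₁} ∉ 𝒳 ∧ {v, w₂} ∉ 𝒳 ∧ {v, w₃} ∉ 𝒳) := by
  obtain ⟨h1, h2', h3, h4, h5, h6⟩ := hd
  -- all other out-arcs from v are absent
  have hAv : ∀ x, x ≠ w₁ → A v x = 0 := by
    intro x hx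
    have hle : ∑ u ∈ ({w₁, x} : Finset V), A v u ≤ ∑ u : V, A v u :=
      Finset.sum_le_sum_of_subset (Finset.subset_univ _)
    rw [Finset.sum_pair (Ne.symm hx)] at hle
    omega
  have hw₂v : A w₂ v = 1 := by have := hAv w₂ (Ne.symm h4); omega
  have hw₃v : A w₃ v = 1 := by have := hAv w₃ (Ne.symm h5); omega
  have hAin : ∀ x, x ≠ w₂ → x ≠ w₃ → A x v = 0 := by
    intro x hx2 hx3
    have hle : ∑ u ∈ ({w₂, w₃, x} : Finset V), A u v ≤ ∑ u : V, A u v :=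
      Finset.sum_le_sum_of_subset (Finset.subset_univ _)
    rw [Finset.sum_insert (by simp [h6, Ne.symm hx2]),
        Finset.sum_pair (Ne.symm hx3)] at hle
    omega
  have hw₁v : A w₁ v = 0 := hAin w₁ h4 h5
  set B := minvertSeq A 𝒳.toList with hB
  set m₁ := ({v, w₁} : Finset V) ∈ 𝒳 with hm₁
  set m₂ := ({v, w₂} : Finset V) ∈ 𝒳 with hm₂
  set m₃ := ({v, w₃} : Finset V) ∈ 𝒳 with hm₃
  have e1 : B v w₁ = if m₁ then 0 else 2 := by
    rw [hB, minvertSeq_pair_eq 𝒳 h2 A v w₁ h1, hw₁, hw₁v]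
  have e1' : B w₁ v = if m₁ then 2 else 0 := by
    rw [hB, minvertSeq_pair_eq 𝒳 h2 A w₁ v (Ne.symm h1), hw₁, hw₁v, Finset.pair_comm]
  have e2 : B v w₂ = if m₂ then 1 else 0 := by
    rw [hB, minvertSeq_pair_eq 𝒳 h2 A v w₂ h2', hw₂v, hAv w₂ (Ne.symm h4)]
  have e2' : B w₂ v = if m₂ then 0 else 1 := by
    rw [hB, minvertSeq_pair_eq 𝒳 h2 A w₂ v (Ne.symm h2'), hw₂v, hAv w₂ (Ne.symm h4),
        Finset.pair_comm]
  have e3 : B v w₃ = if m₃ then 1 else 0 := by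
    rw [hB, minvertSeq_pair_eq 𝒳 h2 A v w₃ h3, hw₃v, hAv w₃ (Ne.symm h5)]
  have e3' : B w₃ v = if m₃ then 0 else 1 := by
    rw [hB, minvertSeq_pair_eq 𝒳 h2 A w₃ v (Ne.symm h3), hw₃v, hAv w₃ (Ne.symm h5),
        Finset.pair_comm]
  have ezero : ∀ x, x ≠ w₁ → x ≠ w₂ → x ≠ w₃ → B v x = 0 := by
    intro x hx1 hx2 hx3
    by_cases hvx : v = x
    · subst hvx
      rw [hB, minvertSeq_eq]
      have h0 : A v v = 0 := hAv v hx1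
      simp [h0]
    · rw [hB, minvertSeq_pair_eq 𝒳 h2 A v x hvx, hAv x hx1, hAin x hx2 hx3]
      simp
  have ezero' : ∀ x, x ≠ w₁ → x ≠ w₂ → x ≠ w₃ → B x v = 0 := by
    intro x hx1 hx2 hx3
    by_cases hvx : x = v
    · subst hvx
      rw [hB, minvertSeq_eq]
      have h0 : A x x = 0 := hAv x hx1
      simp [h0]
    · rw [hB, minvertSeq_pair_eq 𝒳 h2 A x v hvx, hAv x hx1, hAin x hx2 hx3]
      simp
  -- outdegree bound
  have hsubW : ({w₁, w₂, w₃} : Finset V) ⊆ ({v} : Finset V)ᶜ := by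
    intro x hx
    rw [Finset.mem_compl, Finset.mem_singleton]
    simp only [Finset.mem_insert, Finset.mem_singleton] at hx
    rcases hx with rfl | rfl | rfl
    · exact Ne.symm h1
    · exact Ne.symm h2'
    · exact Ne.symm h3
  have memW : ∀ x, x ∈ ({w₁, w₂, w₃} : Finset V) ↔ (x = w₁ ∨ x = w₂ ∨ x = w₃) := by
    intro x; simp
  have hout2 : 2 ≤ B v w₁ + B v w₂ + B v w₃ := by
    have h := hstrong {v} (Finset.singleton_nonempty v) (by
      intro hh
      have : w₁ ∈ ({v} : Finset V) := hh ▸ Finset.mem_univ w₁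
      rw [Finset.mem_singleton] at this
      exact h1 this.symm)
    unfold mdicut at h
    rw [Finset.sum_singleton] at h
    have hsum : ∑ x ∈ ({v} : Finset V)ᶜ, B v x = ∑ x ∈ ({w₁, w₂, w₃} : Finset V), B v x := by
      symm
      apply Finset.sum_subset hsubW
      intro x _ hx
      rw [memW] at hx
      push_neg at hx
      exact ezero x hx.1 hx.2.1 hx.2.2
    rw [hsum, Finset.sum_insert (by simp [h4, h5]), Finset.sum_pair h6] at h
    omega
  have hin2 : 2 ≤ B w₁ v + B w₂ v + B w₃ v := by
    have h := hstrong ({v} : Finset V)ᶜ ⟨w₁, hsubW (by simp)⟩ (by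
      intro hh
      have : v ∈ ({v} : Finset V)ᶜ := hh ▸ Finset.mem_univ v
      simp at this)
    unfold mdicut at h
    rw [compl_compl] at h
    simp only [Finset.sum_singleton] at h
    have hsum : ∑ x ∈ ({v} : Finset V)ᶜ, B x v = ∑ x ∈ ({w₁, w₂, w₃} : Finset V), B x v := by
      symm
      apply Finset.sum_subset hsubW
      intro x _ hx
      rw [memW] at hx
      push_neg at hx
      exact ezero' x hx.1 hx.2.1 hx.2.2
    rw [hsum, Finset.sum_insert (by simp [h4, h5]), Finset.sum_pair h6] at h
    omega
  rw [e1, e2, e3] at hout2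
  rw [e1', e2', e3'] at hin2
  by_cases c1 : m₁ <;> by_cases c2 : m₂ <;> by_cases c3 : m₃ <;>
    simp [c1, c2, c3] at hout2 hin2 ⊢

/-- Let `v` be a vertex of a multidigraph with in- and out-degree `2`, joined to `w₁` by two
parallel arcs and to each of `w₂` and `w₃` by a single arc.  If inverting a collection `𝒳` of
`2`-element sets makes the multidigraph `2`-arc-strong, then `𝒳` contains either all three of
`{v,w₁}, {v,w₂}, {v,w₃}`, or none of them. -/
theorem stmt_13 {V : Type*} [Fintype V] [DecidableEq V] (A : V → V → ℕ)
    (v w₁ w₂ w₃ : V)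
    (hd : v ≠ w₁ ∧ v ≠ w₂ ∧ v ≠ w₃ ∧ w₁ ≠ w₂ ∧ w₁ ≠ w₃ ∧ w₂ ≠ w₃)
    (hw₁ : (A v w₁ = 2 ∧ A w₁ v = 0) ∨ (A w₁ v = 2 ∧ A v w₁ = 0))
    (hw₂ : A v w₂ + A w₂ v = 1) (hw₃ : A v w₃ + A w₃ v = 1)
    (hout : ∑ u : V, A v u = 2) (hin : ∑ u : V, A u v = 2)
    (𝒳 : Finset (Finset V)) (h2 : ∀ Z ∈ 𝒳, Z.card = 2)
    (hstrong : mArcStrong (minvertSeq A 𝒳.toList) 2) :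
    ({v, w₁} ∈ 𝒳 ∧ {v, w₂} ∈ 𝒳 ∧ {v, w₃} ∈ 𝒳) ∨
      ({v, w₁} ∉ 𝒳 ∧ {v, w₂} ∉ 𝒳 ∧ {v, w₃} ∉ 𝒳) := by
  rcases hw₁ with ⟨ha, _⟩ | ⟨ha, _⟩
  · exact stmt_13_aux A v w₁ w₂ w₃ hd ha hw₂ hw₃ hout hin 𝒳 h2 hstrong
  · have hstrong' : mArcStrong (minvertSeq (fun u v => A v u) 𝒳.toList) 2 := by
      rw [minvertSeq_transpose]
      exact mArcStrong_transpose _ 2 hstrong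
    exact stmt_13_aux (fun u v => A v u) v w₁ w₂ w₃ hd ha
      (by show A w₂ v + A v w₂ = 1; omega) (by show A w₃ v + A v w₃ = 1; omega) hin hout 𝒳 h2 hstrong'
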